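/- Let x : Fin N → ℝ² (N ≥ 1) be data points, v¹, v² ∈ ℝ² linearly independent with B⁺ := segment [v¹, v²], and p ∈ (0,1]. If Q⁻_C(p) is neither empty nor all of ℝ², then there exists a FINITE set W ⊆ B⁺ containing v¹ and v² such that Q⁻_C(p) = ⋂_{w ∈ W} Q⁻_w(p), and every w ∈ W with w ≠ v¹ and w ≠ v² satisfies: #{i ∈ Fin N : ⟪w, x i⟫ = q⁻_w(p)} ≥ 2 (at least two data points on the boundary of Q⁻_w(p)) and #{i ∈ Fin N : ⟪w, x i⟫ ≤ q⁻_w(p)} ≥ ⌈N·p⌉ + 1. -/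
import Mathlib


open scoped RealInnerProductSpace

abbrev E2 := EuclideanSpace ℝ (Fin 2)

/-- The empirical `w`-location depth of `z` with respect to the data points `x`. -/
noncomputable def wdepth {N : ℕ} (x : Fin N → E2) (w z : E2) : ℕ :=
  {i : Fin N | ⟪w, x i⟫ ≤ ⟪w, z⟫}.ncard

/-- The cone location depth: the minimum of the `w`-location depths over `w` in the
base `B⁺ = segment [v¹, v²]` of the dual cone. -/
noncomputable def cdepth {N : ℕ} (x : Fin N → E2) (v1 v2 : E2) (z : E2) : ℕ :=
  sInf ((fun w => wdepth x w z) '' segment ℝ v1 v2)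

/-- The empirical lower quantile of the scalarized (univariate) data `⟪w, x ·⟫` at level `K`. -/
noncomputable def scalarQuantile {N : ℕ} (x : Fin N → E2) (w : E2) (K : ℕ) : ℝ :=
  sInf {r : ℝ | ∃ j : Fin N, K ≤ {i : Fin N | ⟪w, x i⟫ ≤ ⟪w, x j⟫}.ncard ∧ r = ⟪w, x j⟫}

namespace Stmt7Aux
open Set

noncomputable def fA {N : ℕ} (A B : Fin N → ℝ) (i : Fin N) (s : ℝ) : ℝ :=
  A i + s * (B i - A i)

noncomputable def qA {N : ℕ} (A B : Fin N → ℝ) (K : ℕ) (s : ℝ) : ℝ :=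
  sInf {r : ℝ | ∃ j : Fin N, K ≤ {i : Fin N | fA A B i s ≤ fA A B j s}.ncard ∧ r = fA A B j s}

def Rset {N : ℕ} (A B : Fin N → ℝ) : Set ℝ :=
  {s | ∃ i j : Fin N, ¬(A i = A j ∧ B i = B j) ∧ fA A B i s = fA A B j s}

variable {N : ℕ} {A B : Fin N → ℝ}

lemma fA_cont (i : Fin N) : Continuous (fA A B i) := by
  unfold fA; continuity

lemma fA_eq_of_two {i j : Fin N} {s1 s2 : ℝ} (hne : s1 ≠ s2)
    (h1 : fA A B i s1 = fA A B j s1) (h2 : fA A B i s2 = fA A B j s2) :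
    A i = A j ∧ B i = B j := by
  unfold fA at h1 h2
  have hs : s1 - s2 ≠ 0 := sub_ne_zero.2 hne
  have hβ : (B i - A i) = (B j - A j) := by
    have h3 : (s1 - s2) * ((B i - A i) - (B j - A j)) = 0 := by nlinarith [h1, h2]
    rcases mul_eq_zero.1 h3 with h | h
    · exact absurd h hs
    · linarith
  have h4 : s1 * (B i - A i) = s1 * (B j - A j) := by rw [hβ]
  constructor
  · linarith
  · linarith

lemma Rset_finite : (Rset A B).Finite := by
  have hsub : Rset A B ⊆ ⋃ (q : Fin N × Fin N),
      {s | ¬(A q.1 = A q.2 ∧ B q.1 = B q.2) ∧ fA A B q.1 s = fA A B q.2 s} := by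
    rintro s ⟨i, j, h1, h2⟩
    exact mem_iUnion.2 ⟨(i, j), h1, h2⟩
  refine Set.Finite.subset (Set.finite_iUnion fun q => ?_) hsub
  have hss : {s | ¬(A q.1 = A q.2 ∧ B q.1 = B q.2) ∧ fA A B q.1 s = fA A B q.2 s}.Subsingleton := by
    rintro s1 ⟨hne, h1⟩ s2 ⟨_, h2⟩
    by_contra hss
    exact hne (fA_eq_of_two hss h1 h2)
  exact hss.finite

lemma le_on_Icc {g1 g2 : ℝ → ℝ} (hg1 : Continuous g1) (hg2 : Continuous g2)
    {u v : ℝ} (huv : u < v) (h : ∀ s ∈ Ioo u v, g1 s ≤ g2 s) :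
    ∀ s ∈ Icc u v, g1 s ≤ g2 s := by
  have hclosed : IsClosed {s : ℝ | g1 s ≤ g2 s} := isClosed_le hg1 hg2
  have h2 : Icc u v ⊆ {s : ℝ | g1 s ≤ g2 s} := by
    rw [← closure_Ioo huv.ne]
    exact closure_minimal h hclosed
  exact h2

lemma no_sign_change {u v : ℝ} (huv : u < v) (hR : Ioo u v ∩ Rset A B = ∅) (i j : Fin N)
    {s1 s2 : ℝ} (hs1 : s1 ∈ Ioo u v) (hs2 : s2 ∈ Ioo u v)
    (hlt : fA A B i s1 < fA A B j s1) : ¬ fA A B j s2 < fA A B i s2 := by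
  intro hgt
  have hne : ∀ s ∈ Ioo u v, fA A B i s ≠ fA A B j s := by
    intro s hs heq
    by_cases hab : A i = A j ∧ B i = B j
    · unfold fA at hlt; rw [hab.1, hab.2] at hlt; exact lt_irrefl _ hlt
    · have hmem : s ∈ Ioo u v ∩ Rset A B := ⟨hs, i, j, hab, heq⟩
      rw [hR] at hmem; exact hmem
  set g : ℝ → ℝ := fun s => fA A B j s - fA A B i s with hg
  have hgc : Continuous g := (fA_cont j).sub (fA_cont i)
  have h1 : 0 < g s1 := by simp only [hg]; linarith
  have h2 : g s2 < 0 := by simp only [hg]; linarith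
  rcases le_total s1 s2 with hle | hle
  · obtain ⟨s', hs', hgs'⟩ := intermediate_value_Icc' hle hgc.continuousOn
      (⟨le_of_lt h2, le_of_lt h1⟩ : (0:ℝ) ∈ Icc (g s2) (g s1))
    have hs'm : s' ∈ Ioo u v := ⟨lt_of_lt_of_le hs1.1 hs'.1, lt_of_le_of_lt hs'.2 hs2.2⟩
    have : fA A B i s' = fA A B j s' := by simp only [hg] at hgs'; linarith
    exact hne s' hs'm this
  · obtain ⟨s', hs', hgs'⟩ := intermediate_value_Icc hle hgc.continuousOn
      (⟨le_of_lt h2, le_of_lt h1⟩ : (0:ℝ) ∈ Icc (g s2) (g s1))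
    have hs'm : s' ∈ Ioo u v := ⟨lt_of_lt_of_le hs2.1 hs'.1, lt_of_le_of_lt hs'.2 hs1.2⟩
    have : fA A B i s' = fA A B j s' := by simp only [hg] at hgs'; linarith
    exact hne s' hs'm this

/-- comparison `fA i ≤ fA j` propagates over a crossing-free interval -/
lemma le_propagate {u v : ℝ} (huv : u < v) (hR : Ioo u v ∩ Rset A B = ∅) (i j : Fin N)
    {s1 : ℝ} (hs1 : s1 ∈ Ioo u v) (h : fA A B i s1 ≤ fA A B j s1) :
    ∀ s ∈ Ioo u v, fA A B i s ≤ fA A B j s := by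
  intro s hs
  by_contra hcon
  push_neg at hcon
  rcases lt_or_eq_of_le h with hlt | heq
  · exact no_sign_change huv hR i j hs1 hs hlt hcon
  · by_cases hab : A i = A j ∧ B i = B j
    · unfold fA at hcon; rw [hab.1, hab.2] at hcon; exact lt_irrefl _ hcon
    · have hmem : s1 ∈ Ioo u v ∩ Rset A B := ⟨hs1, i, j, hab, heq⟩
      rw [hR] at hmem; exact hmem

variable {K : ℕ}

lemma Vset_eq (s : ℝ) : {r : ℝ | ∃ j : Fin N, K ≤ {i : Fin N | fA A B i s ≤ fA A B j s}.ncard ∧ r = fA A B j s}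
    = (fun j => fA A B j s) '' {j | K ≤ {i : Fin N | fA A B i s ≤ fA A B j s}.ncard} := by
  ext r
  constructor
  · rintro ⟨j, hj, rfl⟩; exact ⟨j, hj, rfl⟩
  · rintro ⟨j, hj, rfl⟩; exact ⟨j, hj, rfl⟩

lemma Vset_fin (s : ℝ) : {r : ℝ | ∃ j : Fin N, K ≤ {i : Fin N | fA A B i s ≤ fA A B j s}.ncard ∧ r = fA A B j s}.Finite := by
  rw [Vset_eq]
  exact Set.Finite.image _ (Set.toFinite _)

lemma Vset_ne (hKN : K ≤ N) (hN : 0 < N) (s : ℝ) :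
    {r : ℝ | ∃ j : Fin N, K ≤ {i : Fin N | fA A B i s ≤ fA A B j s}.ncard ∧ r = fA A B j s}.Nonempty := by
  have : Nonempty (Fin N) := Fin.pos_iff_nonempty.1 hN
  obtain ⟨jm, hjm⟩ := Finite.exists_max (fun j : Fin N => fA A B j s)
  refine ⟨fA A B jm s, jm, ?_, rfl⟩
  have huniv : {i : Fin N | fA A B i s ≤ fA A B jm s} = Set.univ := by
    ext i; simp [hjm i]
  rw [huniv, Set.ncard_univ]
  simpa using hKN

lemma qA_mem (hKN : K ≤ N) (hN : 0 < N) (s : ℝ) :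
    ∃ j : Fin N, K ≤ {i : Fin N | fA A B i s ≤ fA A B j s}.ncard ∧ qA A B K s = fA A B j s :=
  (Vset_ne hKN hN s).csInf_mem (Vset_fin s)

lemma qA_le (s : ℝ) {j : Fin N} (hj : K ≤ {i : Fin N | fA A B i s ≤ fA A B j s}.ncard) :
    qA A B K s ≤ fA A B j s :=
  csInf_le (Vset_fin s).bddBelow ⟨j, hj, rfl⟩

lemma depth_lt_iff (hK1 : 1 ≤ K) (hKN : K ≤ N) (hN : 0 < N) (s : ℝ) (t : ℝ) :
    {i : Fin N | fA A B i s ≤ t}.ncard < K ↔ t < qA A B K s := by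
  constructor
  · intro h
    by_contra hcon
    push_neg at hcon
    obtain ⟨j, hj, hq⟩ := qA_mem (A := A) (B := B) hKN hN s
    have hsub : {i : Fin N | fA A B i s ≤ fA A B j s} ⊆ {i : Fin N | fA A B i s ≤ t} := by
      intro i hi
      simp only [Set.mem_setOf_eq] at hi ⊢
      calc fA A B i s ≤ fA A B j s := hi
        _ = qA A B K s := hq.symm
        _ ≤ t := hcon
    have := Set.ncard_le_ncard hsub (Set.toFinite _)
    omega
  · intro h
    by_contra hcon
    push_neg at hcon
    have hne : {i : Fin N | fA A B i s ≤ t}.Nonempty := by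
      apply Set.nonempty_of_ncard_ne_zero; omega
    have hfin := Set.toFinite {i : Fin N | fA A B i s ≤ t}
    obtain ⟨jT, hjTmem, hjTmax⟩ := Finset.exists_max_image hfin.toFinset (fun j => fA A B j s)
      (by rwa [Set.Finite.toFinset_nonempty])
    rw [Set.Finite.mem_toFinset] at hjTmem
    have hsub : {i : Fin N | fA A B i s ≤ t} ⊆ {i : Fin N | fA A B i s ≤ fA A B jT s} := by
      intro i hi
      exact hjTmax i (Set.Finite.mem_toFinset hfin |>.2 hi)
    have hrank : K ≤ {i : Fin N | fA A B i s ≤ fA A B jT s}.ncard :=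
      le_trans hcon (Set.ncard_le_ncard hsub (Set.toFinite _))
    have := qA_le (A := A) (B := B) s hrank
    have : qA A B K s ≤ t := le_trans this hjTmem
    linarith

lemma qext (hK1 : 1 ≤ K) (hKN : K ≤ N) (hN : 0 < N) {u v : ℝ} (huv : u < v)
    (hR : Ioo u v ∩ Rset A B = ∅) :
    ∃ j0 : Fin N, (∀ s ∈ Icc u v, qA A B K s = fA A B j0 s) ∧
      (∀ s ∈ Ioo u v, K ≤ {i : Fin N | fA A B i s ≤ fA A B j0 s}.ncard) := by
  set m := (u + v) / 2 with hm
  have hmm : m ∈ Ioo u v := ⟨by simp only [hm]; linarith, by simp only [hm]; linarith⟩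
  obtain ⟨j0, hj0rank, hj0q⟩ := qA_mem (A := A) (B := B) (K := K) hKN hN m
  have hrank : ∀ s ∈ Ioo u v, K ≤ {i : Fin N | fA A B i s ≤ fA A B j0 s}.ncard := by
    intro s hs
    refine le_trans hj0rank (Set.ncard_le_ncard ?_ (Set.toFinite _))
    intro i hi
    exact le_propagate huv hR i j0 hmm hi s hs
  have hq : ∀ s ∈ Ioo u v, qA A B K s = fA A B j0 s := by
    intro s hs
    refine le_antisymm (qA_le s (hrank s hs)) ?_
    obtain ⟨j1, hj1r, hj1q⟩ := qA_mem (A := A) (B := B) (K := K) hKN hN s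
    have hj1m : K ≤ {i : Fin N | fA A B i m ≤ fA A B j1 m}.ncard := by
      refine le_trans hj1r (Set.ncard_le_ncard ?_ (Set.toFinite _))
      intro i hi
      exact le_propagate huv hR i j1 hs hi m hmm
    have h1 : fA A B j0 m ≤ fA A B j1 m := by
      rw [← hj0q]; exact qA_le m hj1m
    have h2 : fA A B j0 s ≤ fA A B j1 s := le_propagate huv hR j0 j1 hmm h1 s hs
    rw [hj1q]; exact h2
  have hend : ∀ e ∈ Icc u v, qA A B K e = fA A B j0 e := by
    intro e he
    -- (≤): rank of j0 at e is ≥ K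
    have hranke : K ≤ {i : Fin N | fA A B i e ≤ fA A B j0 e}.ncard := by
      refine le_trans hj0rank (Set.ncard_le_ncard ?_ (Set.toFinite _))
      intro i hi
      exact le_on_Icc (fA_cont i) (fA_cont j0) huv
        (fun s hs => le_propagate huv hR i j0 hmm hi s hs) e he
    have hle : qA A B K e ≤ fA A B j0 e := qA_le e hranke
    -- (≥)
    obtain ⟨jstar, hjsr, hjsq⟩ := qA_mem (A := A) (B := B) (K := K) hKN hN e
    set T := {i : Fin N | fA A B i e ≤ fA A B jstar e} with hT
    have hTfin := Set.toFinite T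
    have hTne : T.Nonempty := Set.nonempty_of_ncard_ne_zero (by omega)
    obtain ⟨jT, hjTmem, hjTmax⟩ := Finset.exists_max_image hTfin.toFinset (fun j => fA A B j m)
      (by rwa [Set.Finite.toFinset_nonempty])
    rw [Set.Finite.mem_toFinset] at hjTmem
    have hTsub : ∀ s ∈ Ioo u v, T ⊆ {i : Fin N | fA A B i s ≤ fA A B jT s} := by
      intro s hs i hi
      have him : fA A B i m ≤ fA A B jT m := hjTmax i ((Set.Finite.mem_toFinset hTfin).2 hi)
      exact le_propagate huv hR i jT hmm him s hs
    have hj0T : ∀ s ∈ Ioo u v, fA A B j0 s ≤ fA A B jT s := by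
      intro s hs
      have hrankT : K ≤ {i : Fin N | fA A B i s ≤ fA A B jT s}.ncard :=
        le_trans hjsr (Set.ncard_le_ncard (hTsub s hs) (Set.toFinite _))
      rw [← hq s hs]
      exact qA_le s hrankT
    have h3 : fA A B j0 e ≤ fA A B jT e :=
      le_on_Icc (fA_cont j0) (fA_cont jT) huv hj0T e he
    have h4 : fA A B jT e ≤ fA A B jstar e := hjTmem
    exact le_antisymm hle (by rw [hjsq]; exact le_trans h3 h4)
  exact ⟨j0, hend, hrank⟩

noncomputable def taff (ta tb : ℝ) (s : ℝ) : ℝ := ta + s * (tb - ta)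

lemma aff_bound (α β u v s : ℝ) (h1 : u ≤ s) (h2 : s ≤ v) :
    α + s * β ≤ max (α + u * β) (α + v * β) := by
  rcases le_total 0 β with hb | hb
  · exact le_max_of_le_right (by nlinarith)
  · exact le_max_of_le_left (by nlinarith)

set_option maxHeartbeats 1000000 in
lemma core (hK1 : 1 ≤ K) (hKN : K ≤ N) (hN : 0 < N) (ta tb : ℝ)
    (h0 : K ≤ {i : Fin N | fA A B i 0 ≤ taff ta tb 0}.ncard)
    (h1 : K ≤ {i : Fin N | fA A B i 1 ≤ taff ta tb 1}.ncard)
    {s0 : ℝ} (hs0 : s0 ∈ Icc (0:ℝ) 1)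
    (hdep : {i : Fin N | fA A B i s0 ≤ taff ta tb s0}.ncard < K) :
    ∃ c ∈ Ioo (0:ℝ) 1,
      {i : Fin N | fA A B i c ≤ taff ta tb c}.ncard < K ∧
      (∃ i j : Fin N, ¬(A i = A j ∧ B i = B j) ∧ fA A B i c = fA A B j c) ∧
      2 ≤ {i : Fin N | fA A B i c = qA A B K c}.ncard ∧
      K + 1 ≤ {i : Fin N | fA A B i c ≤ qA A B K c}.ncard := by
  classical
  have hq0 : qA A B K 0 ≤ taff ta tb 0 := by
    by_contra hcon; push_neg at hcon
    have := (depth_lt_iff (A := A) (B := B) hK1 hKN hN 0 (taff ta tb 0)).2 hcon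
    omega
  have hq1 : qA A B K 1 ≤ taff ta tb 1 := by
    by_contra hcon; push_neg at hcon
    have := (depth_lt_iff (A := A) (B := B) hK1 hKN hN 1 (taff ta tb 1)).2 hcon
    omega
  have hqs0 : taff ta tb s0 < qA A B K s0 :=
    (depth_lt_iff hK1 hKN hN s0 (taff ta tb s0)).1 hdep
  have hs0I : s0 ∈ Ioo (0:ℝ) 1 := by
    rcases eq_or_lt_of_le hs0.1 with h | h
    · exfalso; rw [← h] at hqs0; linarith
    rcases eq_or_lt_of_le hs0.2 with h' | h'
    · exfalso; rw [h'] at hqs0; linarith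
    exact ⟨h, h'⟩
  -- the finite set of critical points
  have hCfin : ((Rset A B ∩ Icc (0:ℝ) 1) ∪ {0, 1}).Finite :=
    (Rset_finite.inter_of_left _).union (by simp)
  set CF : Finset ℝ := hCfin.toFinset with hCF
  have h0CF : (0:ℝ) ∈ CF := by simp [hCF]
  have h1CF : (1:ℝ) ∈ CF := by simp [hCF]
  have hmemCF : ∀ c ∈ CF, c ∈ Icc (0:ℝ) 1 := by
    intro c hc
    rw [Set.Finite.mem_toFinset] at hc
    rcases hc with ⟨_, hI⟩ | hc
    · exact hI
    · simp only [Set.mem_insert_iff, Set.mem_singleton_iff] at hc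
      rcases hc with h | h <;> constructor <;> simp [h]
  have hgap : ∀ a b : ℝ, (∀ r ∈ CF, r ∉ Ioo a b) → 0 ≤ a → b ≤ 1 →
      Ioo a b ∩ Rset A B = ∅ := by
    intro a b hr ha hb
    ext r
    simp only [mem_inter_iff, mem_empty_iff_false, iff_false, not_and]
    intro hrI hrR
    have hrCF : r ∈ CF := by
      rw [Set.Finite.mem_toFinset]
      exact Or.inl ⟨hrR, le_trans ha (le_of_lt hrI.1), le_trans (le_of_lt hrI.2) hb⟩
    exact hr r hrCF hrI
  set h : ℝ → ℝ := fun s => qA A B K s - taff ta tb s with hh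
  obtain ⟨cmax, hcmem, hcmax⟩ := Finset.exists_max_image CF h ⟨0, h0CF⟩
  -- the max of h over CF is at least h s0 > 0
  have hMpos : 0 < h cmax := by
    have hkey : h s0 ≤ h cmax := by
      by_cases hs0CF : s0 ∈ CF
      · exact hcmax s0 hs0CF
      · -- build neighbors around s0
        set Fu : Finset ℝ := CF.filter (fun a => a < s0) with hFu
        set Fv : Finset ℝ := CF.filter (fun a => s0 < a) with hFv
        have huf : (0:ℝ) ∈ Fu := by
          rw [hFu, Finset.mem_filter]; exact ⟨h0CF, hs0I.1⟩
        have hvf : (1:ℝ) ∈ Fv := by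
          rw [hFv, Finset.mem_filter]; exact ⟨h1CF, hs0I.2⟩
        set u := Fu.max' ⟨0, huf⟩ with hu
        set v := Fv.min' ⟨1, hvf⟩ with hv
        have humem : u ∈ Fu := Fu.max'_mem ⟨0, huf⟩
        have hvmem : v ∈ Fv := Fv.min'_mem ⟨1, hvf⟩
        rw [hFu, Finset.mem_filter] at humem
        rw [hFv, Finset.mem_filter] at hvmem
        have huCF : u ∈ CF := humem.1
        have hvCF : v ∈ CF := hvmem.1
        have hus : u < s0 := humem.2
        have hsv : s0 < v := hvmem.2
        have huv : u < v := lt_trans hus hsv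
        have hnone : ∀ r ∈ CF, r ∉ Ioo u v := by
          intro r hr hrI
          rcases lt_trichotomy r s0 with hlt | heq | hgt
          · have : r ≤ u := Fu.le_max' r (by rw [hFu, Finset.mem_filter]; exact ⟨hr, hlt⟩)
            linarith [hrI.1]
          · rw [heq] at hr; exact hs0CF hr
          · have : v ≤ r := Fv.min'_le r (by rw [hFv, Finset.mem_filter]; exact ⟨hr, hgt⟩)
            linarith [hrI.2]
        have hRuv := hgap u v hnone (hmemCF u huCF).1 (hmemCF v hvCF).2
        obtain ⟨j0, hj0q, _⟩ := qext (A := A) (B := B) hK1 hKN hN huv hRuv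
        have e1 : h u = (A j0 - ta) + u * ((B j0 - A j0) - (tb - ta)) := by
          simp only [hh, hj0q u ⟨le_refl u, le_of_lt huv⟩]; unfold fA taff; ring
        have e2 : h v = (A j0 - ta) + v * ((B j0 - A j0) - (tb - ta)) := by
          simp only [hh, hj0q v ⟨le_of_lt huv, le_refl v⟩]; unfold fA taff; ring
        have e3 : h s0 = (A j0 - ta) + s0 * ((B j0 - A j0) - (tb - ta)) := by
          simp only [hh, hj0q s0 ⟨le_of_lt hus, le_of_lt hsv⟩]; unfold fA taff; ring
        have hb := aff_bound (A j0 - ta) ((B j0 - A j0) - (tb - ta)) u v s0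
          (le_of_lt hus) (le_of_lt hsv)
        rw [← e1, ← e2, ← e3] at hb
        exact le_trans hb (max_le (hcmax u huCF) (hcmax v hvCF))
    have h2 : 0 < h s0 := by simp only [hh]; linarith
    linarith
  -- take the largest maximizer
  set CM : Finset ℝ := CF.filter (fun a => h cmax ≤ h a) with hCM
  have hcmaxCM : cmax ∈ CM := by
    rw [hCM, Finset.mem_filter]; exact ⟨hcmem, le_refl _⟩
  set c := CM.max' ⟨cmax, hcmaxCM⟩ with hcdef
  have hcmemCM : c ∈ CM := CM.max'_mem ⟨cmax, hcmaxCM⟩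
  rw [hCM, Finset.mem_filter] at hcmemCM
  have hcCF : c ∈ CF := hcmemCM.1
  have hchc : h cmax ≤ h c := hcmemCM.2
  have hhc : 0 < h c := lt_of_lt_of_le hMpos hchc
  have hctop : ∀ c' ∈ CF, h c' ≤ h c := fun c' hc' => le_trans (hcmax c' hc') hchc
  have hstrict : ∀ c' ∈ CF, c < c' → h c' < h c := by
    intro c' hc' hlt
    by_contra hcon
    push_neg at hcon
    have hmem : c' ∈ CM := by
      rw [hCM, Finset.mem_filter]; exact ⟨hc', le_trans hchc hcon⟩
    have := CM.le_max' c' hmem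
    rw [← hcdef] at this
    linarith
  have hcI : c ∈ Ioo (0:ℝ) 1 := by
    have hc0 : c ≠ 0 := by
      intro hc; rw [hc] at hhc; simp only [hh] at hhc; linarith
    have hc1 : c ≠ 1 := by
      intro hc; rw [hc] at hhc; simp only [hh] at hhc; linarith
    exact ⟨lt_of_le_of_ne (hmemCF c hcCF).1 (Ne.symm hc0), lt_of_le_of_ne (hmemCF c hcCF).2 hc1⟩
  -- neighbors of c
  set Fu : Finset ℝ := CF.filter (fun a => a < c) with hFu
  set Fv : Finset ℝ := CF.filter (fun a => c < a) with hFv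
  have huf : (0:ℝ) ∈ Fu := by
    rw [hFu, Finset.mem_filter]; exact ⟨h0CF, hcI.1⟩
  have hvf : (1:ℝ) ∈ Fv := by
    rw [hFv, Finset.mem_filter]; exact ⟨h1CF, hcI.2⟩
  set u' := Fu.max' ⟨0, huf⟩ with hu'
  set v' := Fv.min' ⟨1, hvf⟩ with hv'
  have humem : u' ∈ Fu := Fu.max'_mem ⟨0, huf⟩
  have hvmem : v' ∈ Fv := Fv.min'_mem ⟨1, hvf⟩
  rw [hFu, Finset.mem_filter] at humem
  rw [hFv, Finset.mem_filter] at hvmem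
  have hu'CF : u' ∈ CF := humem.1
  have hv'CF : v' ∈ CF := hvmem.1
  have hu'c : u' < c := humem.2
  have hcv' : c < v' := hvmem.2
  have hnoneL : ∀ r ∈ CF, r ∉ Ioo u' c := by
    intro r hr hrI
    have : r ≤ u' := Fu.le_max' r (by rw [hFu, Finset.mem_filter]; exact ⟨hr, hrI.2⟩)
    linarith [hrI.1]
  have hnoneR : ∀ r ∈ CF, r ∉ Ioo c v' := by
    intro r hr hrI
    have : v' ≤ r := Fv.min'_le r (by rw [hFv, Finset.mem_filter]; exact ⟨hr, hrI.1⟩)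
    linarith [hrI.2]
  have hRL := hgap u' c hnoneL (hmemCF u' hu'CF).1 (le_of_lt hcI.2)
  have hRR := hgap c v' hnoneR (le_of_lt hcI.1) (hmemCF v' hv'CF).2
  obtain ⟨jL, hjLq, hjLrank⟩ := qext (A := A) (B := B) hK1 hKN hN hu'c hRL
  obtain ⟨jR, hjRq, hjRrank⟩ := qext (A := A) (B := B) hK1 hKN hN hcv' hRR
  have hqcL : qA A B K c = fA A B jL c := hjLq c ⟨le_of_lt hu'c, le_refl c⟩
  have hqcR : qA A B K c = fA A B jR c := hjRq c ⟨le_refl c, le_of_lt hcv'⟩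
  have hqu' : qA A B K u' = fA A B jL u' := hjLq u' ⟨le_refl u', le_of_lt hu'c⟩
  have hqv' : qA A B K v' = fA A B jR v' := hjRq v' ⟨le_of_lt hcv', le_refl v'⟩
  have hβL : 0 ≤ (B jL - A jL) - (tb - ta) := by
    by_contra hneg
    push_neg at hneg
    have hprod : (c - u') * ((B jL - A jL) - (tb - ta)) < 0 :=
      mul_neg_of_pos_of_neg (by linarith) hneg
    have hL : h u' ≤ h c := hctop u' hu'CF
    simp only [hh, hqcL, hqu'] at hL
    unfold fA taff at hL
    nlinarith
  have hβR : (B jR - A jR) - (tb - ta) < 0 := by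
    by_contra hnn
    push_neg at hnn
    have hprod : 0 ≤ (v' - c) * ((B jR - A jR) - (tb - ta)) := mul_nonneg (by linarith) hnn
    have hR' : h v' < h c := hstrict v' hv'CF hcv'
    simp only [hh, hqcR, hqv'] at hR'
    unfold fA taff at hR'
    nlinarith
  have hcross : fA A B jL c = fA A B jR c := by rw [← hqcL, ← hqcR]
  have hdist : ¬(A jL = A jR ∧ B jL = B jR) := by
    rintro ⟨ha, hb⟩
    rw [ha, hb] at hβL
    linarith
  have hneidx : jL ≠ jR := fun hEq => hdist ⟨by rw [hEq], by rw [hEq]⟩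
  have htc : taff ta tb c < qA A B K c := by simp only [hh] at hhc; linarith
  refine ⟨c, hcI, ?_, ⟨jL, jR, hdist, hcross⟩, ?_, ?_⟩
  · exact (depth_lt_iff hK1 hKN hN c (taff ta tb c)).2 htc
  · -- at least two points at the quantile
    have hsub : ({jL, jR} : Set (Fin N)) ⊆ {i : Fin N | fA A B i c = qA A B K c} := by
      intro i hi
      rcases hi with hi | hi
      · rw [hi]; exact hqcL.symm
      · rw [hi]; exact hqcR.symm
    calc 2 = ({jL, jR} : Set (Fin N)).ncard := (Set.ncard_pair hneidx).symm
      _ ≤ _ := Set.ncard_le_ncard hsub (Set.toFinite _)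
  · -- at least K+1 points weakly below the quantile
    have hsbI : (c + v') / 2 ∈ Ioo c v' := ⟨by linarith, by linarith⟩
    have hSK : K ≤ {i : Fin N | fA A B i ((c + v') / 2) ≤ fA A B jR ((c + v') / 2)}.ncard :=
      hjRrank _ hsbI
    have hLgtR : ∀ s ∈ Ioo c v', fA A B jR s < fA A B jL s := by
      intro s hs
      have hpp : 0 < (s - c) * (((B jL - A jL) - (tb - ta)) - ((B jR - A jR) - (tb - ta))) :=
        mul_pos (by linarith [hs.1]) (by linarith)
      have hc2 := hcross
      unfold fA at hc2 ⊢
      nlinarith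
    have hjLnotS : jL ∉ {i : Fin N | fA A B i ((c + v') / 2) ≤ fA A B jR ((c + v') / 2)} := by
      intro hmem
      have := hLgtR _ hsbI
      simp only [Set.mem_setOf_eq] at hmem
      linarith
    have hSsub : {i : Fin N | fA A B i ((c + v') / 2) ≤ fA A B jR ((c + v') / 2)}
        ⊆ {i : Fin N | fA A B i c ≤ qA A B K c} := by
      intro i hi
      simp only [Set.mem_setOf_eq] at hi
      have hall := le_propagate hcv' hRR i jR hsbI hi
      have h5 := le_on_Icc (fA_cont i) (fA_cont jR) hcv' hall c ⟨le_refl c, le_of_lt hcv'⟩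
      simp only [Set.mem_setOf_eq, hqcR]
      exact h5
    have hins : insert jL {i : Fin N | fA A B i ((c + v') / 2) ≤ fA A B jR ((c + v') / 2)}
        ⊆ {i : Fin N | fA A B i c ≤ qA A B K c} := by
      intro i hi
      rcases hi with hi | hi
      · rw [hi]; simp only [Set.mem_setOf_eq]; exact le_of_eq hqcL.symm
      · exact hSsub hi
    have hcount : K + 1 ≤ (insert jL
        {i : Fin N | fA A B i ((c + v') / 2) ≤ fA A B jR ((c + v') / 2)}).ncard := by
      rw [Set.ncard_insert_of_notMem hjLnotS (Set.toFinite _)]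
      omega
    exact le_trans hcount (Set.ncard_le_ncard hins (Set.toFinite _))

end Stmt7Aux

open Stmt7Aux Set in
theorem stmt7 {N : ℕ} (hN : 1 ≤ N) (x : Fin N → E2) (v1 v2 : E2)
    (hv : LinearIndependent ℝ ![v1, v2]) (p : ℝ) (hp : p ∈ Set.Ioc (0 : ℝ) 1)
    (hne : {z : E2 | ⌈(N : ℝ) * p⌉₊ ≤ cdepth x v1 v2 z} ≠ ∅)
    (hnu : {z : E2 | ⌈(N : ℝ) * p⌉₊ ≤ cdepth x v1 v2 z} ≠ Set.univ) :
    ∃ W : Set E2, W.Finite ∧ W ⊆ segment ℝ v1 v2 ∧ v1 ∈ W ∧ v2 ∈ W ∧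
      ({z : E2 | ⌈(N : ℝ) * p⌉₊ ≤ cdepth x v1 v2 z}
        = ⋂ w ∈ W, {z : E2 | ⌈(N : ℝ) * p⌉₊ ≤ wdepth x w z}) ∧
      ∀ w ∈ W, w ≠ v1 → w ≠ v2 →
        2 ≤ {i : Fin N | ⟪w, x i⟫ = scalarQuantile x w ⌈(N : ℝ) * p⌉₊}.ncard ∧
        ⌈(N : ℝ) * p⌉₊ + 1 ≤ {i : Fin N | ⟪w, x i⟫ ≤ scalarQuantile x w ⌈(N : ℝ) * p⌉₊}.ncard := by
  set K : ℕ := ⌈(N : ℝ) * p⌉₊ with hK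
  have hNpos : (0:ℝ) < N := by exact_mod_cast hN
  have hK1 : 1 ≤ K := Nat.one_le_ceil_iff.2 (mul_pos hNpos hp.1)
  have hKN : K ≤ N := Nat.ceil_le.2 (by nlinarith [hp.2])
  have hN0 : 0 < N := hN
  set A : Fin N → ℝ := fun i => ⟪v1, x i⟫ with hA
  set B : Fin N → ℝ := fun i => ⟪v2, x i⟫ with hB
  set ws : ℝ → E2 := fun s => (1 - s) • v1 + s • v2 with hws
  have hbr : ∀ (s : ℝ) (y : E2), ⟪ws s, y⟫ = ⟪v1, y⟫ + s * (⟪v2, y⟫ - ⟪v1, y⟫) := by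
    intro s y
    simp only [hws]
    rw [inner_add_left, real_inner_smul_left, real_inner_smul_left]
    ring
  have hbrf : ∀ (s : ℝ) (i : Fin N), ⟪ws s, x i⟫ = fA A B i s := fun s i => hbr s (x i)
  have hws0 : ws 0 = v1 := by simp [hws]
  have hws1 : ws 1 = v2 := by simp [hws]
  have hwd : ∀ (s : ℝ) (z : E2), wdepth x (ws s) z
      = {i : Fin N | fA A B i s ≤ taff ⟪v1, z⟫ ⟪v2, z⟫ s}.ncard := by
    intro s z
    unfold wdepth
    congr 1
    ext i
    simp only [Set.mem_setOf_eq, hbrf, hbr s z]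
    rfl
  have hsq : ∀ s : ℝ, scalarQuantile x (ws s) K = qA A B K s := by
    intro s
    unfold scalarQuantile qA
    congr 1
    ext r
    constructor
    · rintro ⟨j, hj, rfl⟩
      refine ⟨j, ?_, (hbrf s j).symm ▸ rfl⟩
      · convert hj using 2
        ext i
        simp only [Set.mem_setOf_eq, hbrf]
    · rintro ⟨j, hj, rfl⟩
      refine ⟨j, ?_, ?_⟩
      · convert hj using 2
        ext i
        simp only [Set.mem_setOf_eq, hbrf]
      · rw [hbrf]
  have hseg : ∀ s ∈ Icc (0:ℝ) 1, ws s ∈ segment ℝ v1 v2 := by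
    intro s hs
    rw [segment_eq_image ℝ v1 v2]
    exact ⟨s, hs, rfl⟩
  have hsegrev : ∀ w ∈ segment ℝ v1 v2, ∃ s ∈ Icc (0:ℝ) 1, ws s = w := by
    intro w hw
    rw [segment_eq_image ℝ v1 v2] at hw
    obtain ⟨s, hs, hsw⟩ := hw
    exact ⟨s, hs, hsw⟩
  have hcd_iff : ∀ z : E2, K ≤ cdepth x v1 v2 z ↔
      ∀ w ∈ segment ℝ v1 v2, K ≤ wdepth x w z := by
    intro z
    unfold cdepth
    constructor
    · intro hle w hw
      exact le_trans hle (Nat.sInf_le ⟨w, hw, rfl⟩)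
    · intro hall
      apply le_csInf ((Set.nonempty_of_mem (left_mem_segment ℝ v1 v2)).image _)
      rintro b ⟨w, hw, rfl⟩
      exact hall w hw
  -- the finite set of directions
  set Sset : Set ℝ := {s | s ∈ Ioo (0:ℝ) 1 ∧
      (∃ i j : Fin N, ¬(A i = A j ∧ B i = B j) ∧ fA A B i s = fA A B j s) ∧
      2 ≤ {i : Fin N | fA A B i s = qA A B K s}.ncard ∧
      K + 1 ≤ {i : Fin N | fA A B i s ≤ qA A B K s}.ncard} with hSset
  have hSfin : Sset.Finite := Rset_finite.subset (fun s hs => hs.2.1)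
  refine ⟨{v1, v2} ∪ ws '' Sset, ?_, ?_, Or.inl (Or.inl rfl), Or.inl (Or.inr rfl), ?_, ?_⟩
  · exact ((Set.finite_singleton v2).insert v1).union (hSfin.image _)
  · rintro w (hw | ⟨s, hsS, rfl⟩)
    · rcases hw with h | h
      · rw [h]; exact left_mem_segment ℝ v1 v2
      · rw [h]; exact right_mem_segment ℝ v1 v2
    · exact hseg s ⟨le_of_lt hsS.1.1, le_of_lt hsS.1.2⟩
  · -- the set equality
    ext z
    simp only [Set.mem_setOf_eq, Set.mem_iInter]
    constructor
    · intro hz w hw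
      have hwseg : w ∈ segment ℝ v1 v2 := by
        rcases hw with (hw | ⟨s, hsS, rfl⟩)
        · rcases hw with h | h
          · rw [h]; exact left_mem_segment ℝ v1 v2
          · rw [h]; exact right_mem_segment ℝ v1 v2
        · exact hseg s ⟨le_of_lt hsS.1.1, le_of_lt hsS.1.2⟩
      exact (hcd_iff z).1 hz w hwseg
    · intro hz
      rw [hcd_iff z]
      intro w hw
      by_contra hlt
      push_neg at hlt
      obtain ⟨s, hsI, rfl⟩ := hsegrev w hw
      have h0 : K ≤ {i : Fin N | fA A B i 0 ≤ taff ⟪v1, z⟫ ⟪v2, z⟫ 0}.ncard := by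
        rw [← hwd 0 z]
        have := hz v1 (Or.inl (Or.inl rfl))
        rwa [← hws0] at this
      have h1 : K ≤ {i : Fin N | fA A B i 1 ≤ taff ⟪v1, z⟫ ⟪v2, z⟫ 1}.ncard := by
        rw [← hwd 1 z]
        have := hz v2 (Or.inl (Or.inr rfl))
        rwa [← hws1] at this
      rw [hwd s z] at hlt
      obtain ⟨c, hcI, hcdep, hccross, hties, hbelow⟩ :=
        core (A := A) (B := B) hK1 hKN hN0 ⟪v1, z⟫ ⟪v2, z⟫ h0 h1 hsI hlt
      have hcW : ws c ∈ {v1, v2} ∪ ws '' Sset :=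
        Or.inr ⟨c, ⟨hcI, hccross, hties, hbelow⟩, rfl⟩
      have := hz (ws c) hcW
      rw [hwd c z] at this
      omega
  · -- the boundary conditions
    rintro w (hw | ⟨s, hsS, rfl⟩) hwv1 hwv2
    · rcases hw with h | h
      · exact absurd h hwv1
      · exact absurd h hwv2
    · obtain ⟨hsI, hcross, hties, hbelow⟩ := hsS
      constructor
      · calc (2:ℕ) ≤ {i : Fin N | fA A B i s = qA A B K s}.ncard := hties
          _ = {i : Fin N | ⟪ws s, x i⟫ = scalarQuantile x (ws s) K}.ncard := by
            congr 1
            ext i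
            simp only [Set.mem_setOf_eq, hbrf, hsq]
      · calc K + 1 ≤ {i : Fin N | fA A B i s ≤ qA A B K s}.ncard := hbelow
          _ = {i : Fin N | ⟪ws s, x i⟫ ≤ scalarQuantile x (ws s) K}.ncard := by
            congr 1
            ext i
            simp only [Set.mem_setOf_eq, hbrf, hsq]
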